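/- Let h : ℝ^n → ℝ be differentiable with L_h-Lipschitz gradient (L_h > 0), let g : ℝ^n → ℝ be convex, let P : ℝ^n → ℝ ∪ {∞} be proper closed with inf P > −∞, and set F := h + P − g. Fix x̄ ∈ dom P, a convex subgradient ζ ∈ ∂g(x̄), and L > 0, and let u be any global minimizer over ℝ^n of x ↦ ⟨∇h(x̄) − ζ, x − x̄⟩ + (L/2)‖x − x̄‖² + P(x). Then F(u) ≤ F(x̄) + ((L_h − L)/2)‖u − x̄‖². -/

import Mathlib

open Filter Topology InnerProductSpace

set_option maxHeartbeats 1000000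


lemma descent_lemma {n : ℕ}
    (h : EuclideanSpace ℝ (Fin n) → ℝ) (h' : EuclideanSpace ℝ (Fin n) → EuclideanSpace ℝ (Fin n))
    (Lh : ℝ) (hLh : 0 < Lh)
    (hgrad : ∀ x, HasGradientAt h (h' x) x)
    (hlip : LipschitzWith (Real.toNNReal Lh) h')
    (x y : EuclideanSpace ℝ (Fin n)) :
    h y ≤ h x + inner ℝ (h' x) (y - x) + Lh / 2 * ‖y - x‖ ^ 2 := by
  set v := y - x with hv
  set φ : ℝ → ℝ := fun t => h (x + t • v) - t * inner ℝ (h' x) v - t ^ 2 * (Lh / 2) * ‖v‖ ^ 2 with hφ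
  have hdiffh : Differentiable ℝ h := fun p => ((hgrad p).hasFDerivAt).differentiableAt
  have fun_prop_cont : Continuous h := hdiffh.continuous
  have hline : ∀ t : ℝ, HasDerivAt (fun t : ℝ => x + t • v) v t := by
    intro t
    simpa using (HasDerivAt.const_add x ((hasDerivAt_id t).smul_const v))
  have hφd : ∀ t : ℝ, HasDerivAt φ
      ((inner ℝ (h' (x + t • v)) v : ℝ) - inner ℝ (h' x) v - t * Lh * ‖v‖ ^ 2) t := by
    intro t
    have h1 : HasDerivAt (fun t : ℝ => h (x + t • v)) (inner ℝ (h' (x + t • v)) v : ℝ) t := by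
      have := ((hgrad (x + t • v)).hasFDerivAt).comp_hasDerivAt t (hline t)
      exact this
    have h2 : HasDerivAt (fun t : ℝ => t * inner ℝ (h' x) v) (inner ℝ (h' x) v : ℝ) t := by
      simpa using (hasDerivAt_id t).mul_const (inner ℝ (h' x) v : ℝ)
    have h3 : HasDerivAt (fun t : ℝ => t ^ 2 * (Lh / 2) * ‖v‖ ^ 2)
        (t * Lh * ‖v‖ ^ 2) t := by
      have := ((hasDerivAt_pow 2 t).mul_const (Lh / 2)).mul_const (‖v‖ ^ 2)
      refine this.congr_deriv ?_
      ring
    exact (h1.sub h2).sub h3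
  have key : φ 1 ≤ φ 0 := by
    have hanti : AntitoneOn φ (Set.Icc 0 1) := by
      apply antitoneOn_of_deriv_nonpos (convex_Icc 0 1)
      · exact Continuous.continuousOn (by
          apply Continuous.sub
          apply Continuous.sub
          · have hc : Continuous h := fun_prop_cont
            exact hc.comp (by continuity)
          · continuity
          · continuity)
      · intro t ht
        exact ((hφd t).differentiableAt).differentiableWithinAt
      · intro t ht
        rw [interior_Icc] at ht
        rw [(hφd t).deriv]
        have hdiff : (inner ℝ (h' (x + t • v)) v : ℝ) - inner ℝ (h' x) v
            = inner ℝ (h' (x + t • v) - h' x) v := by rw [inner_sub_left]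
        rw [hdiff]
        have hb : (inner ℝ (h' (x + t • v) - h' x) v : ℝ) ≤ ‖h' (x + t • v) - h' x‖ * ‖v‖ :=
          real_inner_le_norm _ _
        have hlipb : ‖h' (x + t • v) - h' x‖ ≤ Lh * (t * ‖v‖) := by
          have := hlip.dist_le_mul (x + t • v) x
          rw [dist_eq_norm, dist_eq_norm] at this
          simp only [add_sub_cancel_left] at this
          rw [Real.coe_toNNReal _ hLh.le] at this
          calc ‖h' (x + t • v) - h' x‖ ≤ Lh * ‖t • v‖ := this
            _ = Lh * (t * ‖v‖) := by
                rw [norm_smul, Real.norm_eq_abs, abs_of_pos ht.1]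
        nlinarith [norm_nonneg v, ht.1, hb, mul_le_mul_of_nonneg_right hlipb (norm_nonneg v)]
    exact hanti (by norm_num) (by norm_num) (by norm_num)
  have h01 : x + (1 : ℝ) • v = y := by rw [hv]; simp
  have k0 : φ 0 = h x := by simp [hφ]
  have k1 : φ 1 = h y - inner ℝ (h' x) v - Lh / 2 * ‖v‖ ^ 2 := by
    simp only [hφ, one_smul, one_pow, one_mul]
    rw [show x + v = y from by rw [hv]; abel]
  rw [k0, k1] at key
  linarith


/-- Descent property of one majorized proximal gradient step.  Let `h` be
differentiable with `L_h`-Lipschitz gradient, `g` convex, `P` proper closed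
bounded below, `F = h + P − g`.  For `x̄ ∈ dom P`, `ζ ∈ ∂g(x̄)`, `L > 0`, any
global minimizer `u` of `x ↦ ⟨∇h(x̄) − ζ, x − x̄⟩ + (L/2)‖x − x̄‖² + P(x)`
satisfies `F(u) ≤ F(x̄) + ((L_h − L)/2)‖u − x̄‖²`. -/
theorem npg_major_descent {n : ℕ}
    (h : EuclideanSpace ℝ (Fin n) → ℝ) (h' : EuclideanSpace ℝ (Fin n) → EuclideanSpace ℝ (Fin n))
    (Lh : ℝ) (hLh : 0 < Lh)
    (hgrad : ∀ x, HasGradientAt h (h' x) x)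
    (hlip : LipschitzWith (Real.toNNReal Lh) h')
    (g : EuclideanSpace ℝ (Fin n) → ℝ) (hg : ConvexOn ℝ Set.univ g)
    (P : EuclideanSpace ℝ (Fin n) → EReal)
    (hPproper : ∃ x, P x ≠ ⊤) (hPbot : ∀ x, P x ≠ ⊥)
    (hPclosed : LowerSemicontinuous P)
    (hPbdd : ∃ b : ℝ, ∀ x, (b : EReal) ≤ P x)
    (xbar : EuclideanSpace ℝ (Fin n)) (hxbar : P xbar ≠ ⊤)
    (ζ : EuclideanSpace ℝ (Fin n))
    (hζ : ∀ y, g xbar + inner ℝ ζ (y - xbar) ≤ g y)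
    (L : ℝ) (hL : 0 < L)
    (u : EuclideanSpace ℝ (Fin n))
    (hu : ∀ x, ((inner ℝ (h' xbar - ζ) (u - xbar) + (L / 2) * ‖u - xbar‖ ^ 2 : ℝ) : EReal) + P u ≤
      ((inner ℝ (h' xbar - ζ) (x - xbar) + (L / 2) * ‖x - xbar‖ ^ 2 : ℝ) : EReal) + P x) :
    (h u : EReal) + P u - (g u : ℝ) ≤
      (h xbar : EReal) + P xbar - (g xbar : ℝ) +
        (((Lh - L) / 2 * ‖u - xbar‖ ^ 2 : ℝ) : EReal) := by
  -- From minimality at x = xbar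
  have hmin := hu xbar
  have hz : ((inner ℝ (h' xbar - ζ) (xbar - xbar) + (L / 2) * ‖xbar - xbar‖ ^ 2 : ℝ) : EReal)
      = (0 : EReal) := by
    norm_num
  rw [hz, zero_add] at hmin
  set A : ℝ := inner ℝ (h' xbar - ζ) (u - xbar) + (L / 2) * ‖u - xbar‖ ^ 2 with hA
  -- P xbar is finite
  obtain ⟨px, hpx⟩ : ∃ px : ℝ, P xbar = (px : EReal) := by
    lift P xbar to ℝ using ⟨hxbar, hPbot xbar⟩ with px
    exact ⟨px, rfl⟩
  -- P u is finite
  have hPu_ne_top : P u ≠ ⊤ := by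
    intro htop
    rw [htop, hpx] at hmin
    simp [EReal.add_top_of_ne_bot (by simp : (A : EReal) ≠ ⊥)] at hmin
  obtain ⟨pu, hpu⟩ : ∃ pu : ℝ, P u = (pu : EReal) := by
    lift P u to ℝ using ⟨hPu_ne_top, hPbot u⟩ with pu
    exact ⟨pu, rfl⟩
  rw [hpu, hpx] at hmin
  have hmin' : A + pu ≤ px := by exact_mod_cast hmin
  -- descent lemma
  have hdesc := descent_lemma h h' Lh hLh hgrad hlip xbar u
  -- convexity
  have hconv := hζ u
  -- assemble the real inequality
  have hinner : (inner ℝ (h' xbar - ζ) (u - xbar) : ℝ)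
      = inner ℝ (h' xbar) (u - xbar) - inner ℝ ζ (u - xbar) := inner_sub_left _ _ _
  have hreal : h u + pu - g u ≤ h xbar + px - g xbar + (Lh - L) / 2 * ‖u - xbar‖ ^ 2 := by
    rw [hA, hinner] at hmin'
    nlinarith [hmin', hdesc, hconv]
  rw [hpu, hpx]
  exact_mod_cast hreal
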